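/- For M > 0 and w ∈ ℂ with w ∉ [0, M] (w off the positive real axis), the integral F(w, M) = ∫₀^M ln(1 + iζ/2)/(ζ − w) dζ equals ln(1 + iw/2)·ln((M − w)/(−w)) − L₂(−A(w,M)) + L₂(−A(w,0)), where A(w,ℓ) = (i/2)(ℓ − w)/(1 + iw/2) and L₂ is the dilogarithm, provided all logarithms are taken on branches continuous along the integration path. -/

import Mathlib

open Complex

open MeasureTheory Metric intervalIntegral Set

lemma div_slit_re {a b : ℂ} (ha : 0 < a.re) (hb : 0 < b.re) : a / b ∈ slitPlane := by
  rw [mem_slitPlane_iff]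
  by_contra h
  push_neg at h
  obtain ⟨h1, h2⟩ := h
  have hb0 : b ≠ 0 := fun h => by simp [h] at hb
  have ha' : a = a / b * b := (div_mul_cancel₀ a hb0).symm
  have h3 := congrArg Complex.re ha'
  rw [Complex.mul_re, h2] at h3
  nlinarith
lemma div_slit_im {a b : ℂ} (ha : a.im < 0) (hb : b.im < 0) : a / b ∈ slitPlane := by
  rw [mem_slitPlane_iff]
  by_contra h
  push_neg at h
  obtain ⟨h1, h2⟩ := h
  have hb0 : b ≠ 0 := fun h => by simp [h] at hb
  have ha' : a = a / b * b := (div_mul_cancel₀ a hb0).symm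
  have h3 := congrArg Complex.im ha'
  rw [Complex.mul_im, h2] at h3
  nlinarith
lemma log_div_re {a b : ℂ} (ha : 0 < a.re) (hb : 0 < b.re) : Complex.log (a/b) = Complex.log a - Complex.log b := by
  have ha0 : a ≠ 0 := fun h => by simp [h] at ha
  have hb0 : b ≠ 0 := fun h => by simp [h] at hb
  have hargb : |arg b| < Real.pi / 2 := Complex.abs_arg_lt_pi_div_two_iff.2 (Or.inl hb)
  have harga : |arg a| < Real.pi / 2 := Complex.abs_arg_lt_pi_div_two_iff.2 (Or.inl ha)
  have hbpi : arg b ≠ Real.pi := by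
    intro h; rw [h] at hargb; rw [abs_of_pos Real.pi_pos] at hargb; linarith [Real.pi_pos]
  have hinv : arg b⁻¹ = - arg b := by rw [Complex.arg_inv, if_neg hbpi]
  rw [div_eq_mul_inv, Complex.log_mul ha0 (inv_ne_zero hb0), Complex.log_inv _ hbpi]
  · ring
  · rw [hinv]
    constructor
    · rw [abs_lt] at harga hargb; linarith [Real.pi_pos]
    · rw [abs_lt] at harga hargb; nlinarith [Real.pi_pos]


/-- Euler's dilogarithm via the integral representation `L₂(z) = -∫₀¹ log(1 - t z)/t dt`. -/
noncomputable def dilogInt (z : ℂ) : ℂ := -∫ t in (0:ℝ)..1, Complex.log (1 - t*z) / t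


lemma one_sub_slit {t : ℝ} {x : ℂ} (ht0 : 0 ≤ t) (ht1 : t ≤ 1)
    (hx : ¬(x.im = 0 ∧ 1 ≤ x.re)) : 1 - (t:ℂ)*x ∈ slitPlane := by
  rw [mem_slitPlane_iff]
  by_contra h
  push_neg at h
  obtain ⟨h1, h2⟩ := h
  rw [Complex.sub_re, Complex.mul_re, Complex.one_re, Complex.ofReal_re,
    Complex.ofReal_im] at h1
  rw [Complex.sub_im, Complex.mul_im, Complex.one_im, Complex.ofReal_re,
    Complex.ofReal_im] at h2
  simp only [zero_mul, sub_zero, zero_sub, neg_eq_zero, mul_zero, add_zero] at h1 h2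
  rcases eq_or_lt_of_le ht0 with h0 | h0
  · rw [← h0] at h1; norm_num at h1
  · have hxim : x.im = 0 := by
      rcases mul_eq_zero.1 h2 with h | h
      · exact absurd h (ne_of_gt h0)
      · exact h
    have hxre : 1 ≤ x.re := by nlinarith
    exact hx ⟨hxim, hxre⟩

set_option maxHeartbeats 1000000 in
lemma dilog_hasDerivAt {z : ℂ} (hzS : ¬(z.im = 0 ∧ 1 ≤ z.re)) (hz0 : z ≠ 0) :
    HasDerivAt dilogInt (-Complex.log (1 - z) / z) z := by
  -- the bad set is closed
  have hSc : IsClosed {x : ℂ | x.im = 0 ∧ 1 ≤ x.re} :=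
    (isClosed_eq Complex.continuous_im continuous_const).inter
      (isClosed_le continuous_const Complex.continuous_re)
  obtain ⟨ε, hε, hball⟩ := Metric.isOpen_iff.1 hSc.isOpen_compl z hzS
  set ε' := ε/2 with hε'def
  have hε' : 0 < ε' := by positivity
  have hsub : closedBall z ε' ⊆ {x : ℂ | ¬(x.im = 0 ∧ 1 ≤ x.re)} := by
    intro x hx
    exact hball (lt_of_le_of_lt (mem_closedBall.1 hx) (by linarith))
  -- compact minimum of ‖1 - t x‖
  set K : Set (ℝ × ℂ) := Icc (0:ℝ) 1 ×ˢ closedBall z ε' with hKdef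
  have hK : IsCompact K := isCompact_Icc.prod (isCompact_closedBall z ε')
  have hKne : K.Nonempty := ⟨(0, z), by simp [hKdef, hε'.le]⟩
  have hcont : ContinuousOn (fun p : ℝ × ℂ => ‖1 - (p.1:ℂ)*p.2‖) K :=
    (continuous_const.sub ((Complex.continuous_ofReal.comp continuous_fst).mul
      continuous_snd)).norm.continuousOn
  obtain ⟨p, hpK, hpmin⟩ := hK.exists_isMinOn hKne hcont
  rw [isMinOn_iff] at hpmin
  set m : ℝ := ‖1 - (p.1:ℂ)*p.2‖ with hmdef
  have hm : 0 < m := by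
    rw [hmdef, norm_pos_iff]
    exact Complex.slitPlane_ne_zero
      (one_sub_slit hpK.1.1 hpK.1.2 (hsub hpK.2))
  have key : ∀ t ∈ Icc (0:ℝ) 1, ∀ x ∈ closedBall z ε', m ≤ ‖1 - (t:ℂ)*x‖ :=
    fun t ht x hx => hpmin (t, x) ⟨ht, hx⟩
  -- uniform bound on ‖log (1 - t x)‖ via MVT
  have hlogbd : ∀ t ∈ Icc (0:ℝ) 1, ∀ x ∈ closedBall z ε',
      ‖Complex.log (1 - (t:ℝ)*x)‖ ≤ ‖x‖/m * t := by
    intro t ht x hx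
    have hder : ∀ s ∈ Icc (0:ℝ) 1,
        HasDerivWithinAt (fun s : ℝ => Complex.log (1 - (s:ℝ)*x))
          (-(x/(1 - (s:ℝ)*x))) (Icc 0 1) s := by
      intro s hs
      have h1 : HasDerivAt (fun s : ℝ => 1 - (s:ℂ)*x) (-x) s := by
        simpa using ((Complex.ofRealCLM.hasDerivAt (x := s)).mul_const x).const_sub 1
      have h2 := h1.clog_real (one_sub_slit hs.1 hs.2 (hsub hx))
      have h3 : -x / (1 - (s:ℂ)*x) = -(x/(1 - (s:ℂ)*x)) := by ring
      rw [h3] at h2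
      exact h2.hasDerivWithinAt
    have hbd : ∀ s ∈ Ico (0:ℝ) 1, ‖-(x/(1 - (s:ℝ)*x))‖ ≤ ‖x‖/m := by
      intro s hs
      rw [norm_neg, norm_div]
      exact div_le_div_of_nonneg_left (norm_nonneg x) hm
        (key s (Ico_subset_Icc_self hs) x hx)
    have := norm_image_sub_le_of_norm_deriv_le_segment' hder hbd t ht
    simpa using this
  have hmeasF : ∀ x : ℂ, Measurable (fun t : ℝ => Complex.log (1 - (t:ℝ)*x) / t) := by
    intro x
    exact (Measurable.clog (measurable_const.sub
      (Complex.measurable_ofReal.mul measurable_const))).div Complex.measurable_ofReal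
  have hIoc : Set.uIoc (0:ℝ) 1 = Ioc (0:ℝ) 1 := uIoc_of_le zero_le_one
  have h_int : IntervalIntegrable (fun t : ℝ => Complex.log (1 - (t:ℝ)*z) / t) volume 0 1 := by
    rw [intervalIntegrable_iff, hIoc]
    apply Measure.integrableOn_of_bounded (M := ‖z‖/m) measure_Ioc_lt_top.ne
      (hmeasF z).aestronglyMeasurable
    rw [ae_restrict_iff' measurableSet_Ioc]
    apply ae_of_all
    intro t ht
    have h1 := hlogbd t (Ioc_subset_Icc_self ht) z (mem_closedBall_self hε'.le)
    rw [norm_div, Complex.norm_real, Real.norm_eq_abs, abs_of_pos ht.1, div_le_iff₀ ht.1]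
    exact h1
  have hFmeas : ∀ᶠ x in nhds z, AEStronglyMeasurable
      (fun t : ℝ => Complex.log (1 - (t:ℝ)*x) / t) (volume.restrict (Set.uIoc (0:ℝ) 1)) :=
    Filter.Eventually.of_forall (fun x => (hmeasF x).aestronglyMeasurable)
  have hF'meas : AEStronglyMeasurable (fun t : ℝ => -(1/(1 - (t:ℝ)*z)))
      (volume.restrict (Set.uIoc (0:ℝ) 1)) := by
    apply Measurable.aestronglyMeasurable
    exact (measurable_const.div (measurable_const.sub
      (Complex.measurable_ofReal.mul measurable_const))).neg
  have h_bound : ∀ᵐ t ∂(volume : Measure ℝ), t ∈ Set.uIoc (0:ℝ) 1 →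
      ∀ x ∈ ball z ε', ‖-(1/(1 - (t:ℝ)*x))‖ ≤ 1/m := by
    apply ae_of_all
    intro t ht x hx
    rw [hIoc] at ht
    rw [norm_neg, norm_div, norm_one]
    exact one_div_le_one_div_of_le hm
      (key t (Ioc_subset_Icc_self ht) x (ball_subset_closedBall hx))
  have h_diff : ∀ᵐ t ∂(volume : Measure ℝ), t ∈ Set.uIoc (0:ℝ) 1 →
      ∀ x ∈ ball z ε', HasDerivAt (fun x => Complex.log (1 - (t:ℝ)*x) / t)
        (-(1/(1 - (t:ℝ)*x))) x := by
    apply ae_of_all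
    intro t ht x hx
    rw [hIoc] at ht
    have ht0 : (0:ℝ) < t := ht.1
    have htC : (t:ℂ) ≠ 0 := by exact_mod_cast ht0.ne'
    have hslit : 1 - (t:ℂ)*x ∈ slitPlane :=
      one_sub_slit ht0.le ht.2 (hsub (ball_subset_closedBall hx))
    have hne : 1 - (t:ℂ)*x ≠ 0 := Complex.slitPlane_ne_zero hslit
    have h1 : HasDerivAt (fun x : ℂ => 1 - (t:ℂ)*x) (-(t:ℂ)) x := by
      simpa using ((hasDerivAt_id x).const_mul (t:ℂ)).const_sub 1
    have h2 := (h1.clog hslit).div_const (t:ℂ)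
    refine h2.congr_deriv ?_
    field_simp
  have hres := intervalIntegral.hasDerivAt_integral_of_dominated_loc_of_deriv_le
    (𝕜 := ℂ) (μ := MeasureTheory.volume) (F := fun x t => Complex.log (1 - (t:ℝ)*x) / t)
    (F' := fun x t => -(1/(1 - (t:ℝ)*x))) (bound := fun _ => 1/m)
    (ball_mem_nhds z hε') hFmeas h_int hF'meas h_bound intervalIntegrable_const h_diff
  have hder := hres.2
  have hcalc : (∫ t in (0:ℝ)..1, -(1/(1 - (t:ℝ)*z))) = Complex.log (1 - z)/z := by
    have hG : ∀ t ∈ uIcc (0:ℝ) 1, HasDerivAt (fun t : ℝ => Complex.log (1 - (t:ℝ)*z)/z)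
        (-(1/(1 - (t:ℝ)*z))) t := by
      intro t ht
      rw [uIcc_of_le zero_le_one] at ht
      have hslit : 1 - (t:ℂ)*z ∈ slitPlane := one_sub_slit ht.1 ht.2 hzS
      have hne : 1 - (t:ℂ)*z ≠ 0 := Complex.slitPlane_ne_zero hslit
      have h1 : HasDerivAt (fun s : ℝ => 1 - (s:ℂ)*z) (-z) t := by
        simpa using ((Complex.ofRealCLM.hasDerivAt (x := t)).mul_const z).const_sub 1
      have h2 := (h1.clog_real hslit).div_const z
      refine h2.congr_deriv ?_
      field_simp
    have hint2 : IntervalIntegrable (fun t : ℝ => -(1/(1 - (t:ℝ)*z))) MeasureTheory.volume 0 1 := by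
      apply ContinuousOn.intervalIntegrable
      apply ContinuousOn.neg
      apply ContinuousOn.div continuousOn_const
        ((continuous_const.sub (Complex.continuous_ofReal.mul continuous_const)).continuousOn)
      intro t ht
      rw [uIcc_of_le zero_le_one] at ht
      exact Complex.slitPlane_ne_zero (one_sub_slit ht.1 ht.2 hzS)
    rw [intervalIntegral.integral_eq_sub_of_hasDerivAt hG hint2]
    norm_num
  have hder2 : HasDerivAt (fun x => ∫ t in (0:ℝ)..1, Complex.log (1 - (t:ℝ)*x)/t)
      (∫ t in (0:ℝ)..1, -(1/(1 - (t:ℝ)*z))) z := hder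
  rw [hcalc] at hder2
  have hfin := hder2.neg
  rw [neg_div]
  exact hfin


/-- The coefficient `A(w,ℓ) = (i/2)(ℓ - w)/(1 + i w/2)`. -/
noncomputable def Acoef (w ℓ : ℂ) : ℂ := (I/2) * (ℓ - w) / (1 + I*w/2)

set_option maxHeartbeats 1000000 in
theorem stmt9 (M : ℝ) (hM : 0 < M) (w : ℂ) (hw : w.im < 0) :
    ∫ ζ in (0:ℝ)..M, Complex.log (1 + I*ζ/2) / ((ζ:ℂ) - w) =
      Complex.log (1 + I*w/2) * Complex.log ((M - w)/(-w))
        - dilogInt (-(Acoef w M)) + dilogInt (-(Acoef w 0)) := by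
  have hwre : (1 + I*w/2).re = 1 - w.im/2 := by
    simp [Complex.add_re, Complex.div_re, Complex.mul_re, Complex.normSq]
    ring
  have hwpos : 0 < (1 + I*w/2).re := by rw [hwre]; linarith
  have hden : (1 + I*w/2) ≠ 0 := fun h => by simp [h] at hwpos
  have hw0 : w ≠ 0 := fun h => by simp [h] at hw
  have h2w : (2:ℂ) + I*w ≠ 0 := by
    intro h
    apply hden
    rw [show (1:ℂ) + I*w/2 = (2 + I*w)/2 by ring, h, zero_div]
  have hxw : ∀ x : ℝ, (x:ℂ) - w ≠ 0 := by
    intro x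
    apply sub_ne_zero.2
    intro h
    rw [← h] at hw
    simp at hw
  have hxre : ∀ x : ℝ, (1 + I*(x:ℂ)/2).re = 1 := by
    intro x
    simp [Complex.add_re, Complex.div_re, Complex.mul_re, Complex.normSq]
  have hderiv : ∀ x : ℝ, HasDerivAt
      (fun x : ℝ => Complex.log (1 + I*w/2) * Complex.log (((x:ℂ) - w)/(-w))
        - dilogInt (-(Acoef w (x:ℂ))))
      (Complex.log (1 + I*(x:ℂ)/2) / ((x:ℂ) - w)) x := by
    intro x
    -- piece 1
    have inner1 : HasDerivAt (fun u : ℂ => (u - w)/(-w)) (1/(-w)) (x:ℂ) :=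
      ((hasDerivAt_id _).sub_const w).div_const (-w)
    have hslit1 : ((x:ℂ) - w)/(-w) ∈ slitPlane := by
      rw [show ((x:ℂ) - w) = -(w - (x:ℂ)) by ring, neg_div_neg_eq]
      apply div_slit_im _ hw
      simpa [Complex.sub_im] using hw
    have e1 : HasDerivAt (fun u : ℂ => Complex.log ((u - w)/(-w))) (1/((x:ℂ)-w)) (x:ℂ) := by
      have h := inner1.clog hslit1
      convert h using 1
      field_simp
    have p1 : HasDerivAt (fun x : ℝ => Complex.log (1 + I*w/2) * Complex.log (((x:ℂ) - w)/(-w)))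
        (Complex.log (1 + I*w/2) * (1/((x:ℂ)-w))) x :=
      (e1.comp_ofReal).const_mul _
    -- piece 2
    set z₀ : ℂ := -(Acoef w (x:ℂ)) with hz₀set
    have hz₀ : z₀ = -((I/2)*((x:ℂ)-w)/(1+I*w/2)) := by rw [hz₀set]; simp [Acoef]
    have hz0ne : z₀ ≠ 0 := by
      rw [hz₀, neg_ne_zero]
      exact div_ne_zero (mul_ne_zero (div_ne_zero Complex.I_ne_zero two_ne_zero) (hxw x)) hden
    have hC : ∀ t : ℝ, t ∈ Set.Icc (0:ℝ) 1 → 1 - (t:ℂ)*z₀ ∈ slitPlane := by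
      intro t ht
      have hC1 : 1 - (t:ℂ)*z₀ = (1 + I*w/2 + (t:ℂ)*((I/2)*((x:ℂ)-w))) / (1 + I*w/2) := by
        rw [hz₀]
        field_simp [h2w]
        ring
      rw [hC1]
      apply div_slit_re _ hwpos
      have hre : (1 + I*w/2 + (t:ℂ)*((I/2)*((x:ℂ)-w))).re = 1 - w.im/2 + t*(w.im/2) := by
        simp [Complex.add_re, Complex.div_re, Complex.mul_re, Complex.mul_im,
          Complex.normSq, Complex.sub_re, Complex.sub_im]
        ring
      rw [hre]
      nlinarith [ht.1, ht.2, hw]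
    have hzS : ¬(z₀.im = 0 ∧ 1 ≤ z₀.re) := by
      rintro ⟨h1, h2⟩
      have hz0re : (0:ℝ) < z₀.re := by linarith
      have ht : (1/z₀.re) ∈ Set.Icc (0:ℝ) 1 := ⟨by positivity, by rw [div_le_one hz0re]; linarith⟩
      have hmem := hC _ ht
      have hzero : (1:ℂ) - (((1/z₀.re : ℝ)):ℂ)*z₀ = 0 := by
        rw [Complex.ext_iff]
        constructor
        · simp only [Complex.sub_re, Complex.mul_re, Complex.one_re, Complex.ofReal_re,
            Complex.ofReal_im, Complex.zero_re, h1, mul_zero, zero_mul, sub_zero]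
          field_simp
          ring
        · simp [Complex.sub_im, Complex.mul_im, h1]
      rw [hzero] at hmem
      exact Complex.zero_notMem_slitPlane hmem
    have douter := dilog_hasDerivAt hzS hz0ne
    have dinner : HasDerivAt (fun u : ℂ => -(Acoef w u)) (-((I/2)*1/(1+I*w/2))) (x:ℂ) := by
      have h := ((((hasDerivAt_id ((x:ℂ))).sub_const w).const_mul (I/2)).div_const (1+I*w/2)).neg
      exact h
    have comp := (douter.comp (x:ℂ) dinner).comp_ofReal
    have h1mz : 1 - z₀ = (1 + I*(x:ℂ)/2)/(1 + I*w/2) := by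
      rw [hz₀]
      field_simp [h2w]
      ring
    have hlog : Complex.log (1 - z₀) = Complex.log (1 + I*(x:ℂ)/2) - Complex.log (1 + I*w/2) := by
      rw [h1mz]
      exact log_div_re (by rw [hxre x]; norm_num) hwpos
    have comp' : HasDerivAt (fun x : ℝ => dilogInt (-(Acoef w (x:ℂ))))
        ((-Complex.log (1 - z₀)/z₀) * (-((I/2)*1/(1+I*w/2)))) x := comp
    have p2 : HasDerivAt (fun x : ℝ => dilogInt (-(Acoef w (x:ℂ))))
        (-((Complex.log (1 + I*(x:ℂ)/2) - Complex.log (1 + I*w/2)) / ((x:ℂ)-w))) x := by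
      convert comp' using 1
      rw [hlog, hz₀]
      field_simp [h2w, hxw x]
    have hsum := p1.sub p2
    refine hsum.congr_deriv ?_
    ring
  have hint : IntervalIntegrable (fun x : ℝ => Complex.log (1 + I*(x:ℂ)/2) / ((x:ℂ) - w))
      MeasureTheory.volume 0 M := by
    apply ContinuousOn.intervalIntegrable
    apply ContinuousOn.div
    · apply ContinuousOn.clog
      · exact (continuous_const.add ((continuous_const.mul Complex.continuous_ofReal).div_const 2)).continuousOn
      · intro x _
        exact Or.inl (by rw [hxre x]; norm_num)
    · exact (Complex.continuous_ofReal.sub continuous_const).continuousOn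
    · intro x _
      exact hxw x
  have hFTC := intervalIntegral.integral_eq_sub_of_hasDerivAt (fun x _ => hderiv x) hint
  rw [hFTC]
  simp [Complex.ofReal_zero, zero_sub, div_self (neg_ne_zero.2 hw0), Complex.log_one]
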